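/- For real b with 0 < b < 1, ∫_0^∞ e^{-x} K_0(bx) dx = (log(1+√(1-b²)) − log(1−√(1-b²))) / (2√(1-b²)). -/

import Mathlib

open MeasureTheory Set Real Filter Topology

/-- Modified Bessel function of the second kind, via the integral representation
`K_ν(x) = ∫_0^∞ exp(-x cosh t) cosh(ν t) dt` (valid for `x > 0`). -/
noncomputable def besselK (ν x : ℝ) : ℝ :=
  ∫ t in Set.Ioi (0 : ℝ), Real.exp (-x * Real.cosh t) * Real.cosh (ν * t)


lemma my_integral_exp_neg_mul {c : ℝ} (hc : 0 < c) :
    ∫ x in Set.Ioi (0:ℝ), Real.exp (-(x * c)) = 1 / c := by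
  have hderiv : ∀ x ∈ Set.Ici (0:ℝ),
      HasDerivAt (fun x => -Real.exp (-(x * c)) / c) (Real.exp (-(x * c))) x := by
    intro x _
    have h1 : HasDerivAt (fun x : ℝ => -(x * c)) (-c) x := by
      simpa using ((hasDerivAt_id x).mul_const c).fun_neg
    have := (h1.exp.fun_neg).div_const c
    refine this.congr_deriv ?_
    field_simp
  have hint : IntegrableOn (fun x : ℝ => Real.exp (-(x * c))) (Set.Ioi 0) := by
    simpa [neg_mul, mul_comm] using exp_neg_integrableOn_Ioi 0 hc
  have htend : Tendsto (fun x => -Real.exp (-(x * c)) / c) atTop (𝓝 0) := by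
    have : Tendsto (fun x : ℝ => -(x * c)) atTop atBot :=
      tendsto_neg_atTop_atBot.comp (tendsto_id.atTop_mul_const hc)
    have := (tendsto_exp_atBot.comp this).neg.div_const c
    simpa using this
  have := integral_Ioi_of_hasDerivAt_of_tendsto' hderiv hint htend
  rw [this]; field_simp; simp


lemma key_alg (b s u : ℝ) (hb : 0 < b) (hs : 0 < s) (hu : 0 < u)
    (hs2 : s^2 = 1 - b^2) (hs1 : s < 1) :
    (-u/(u+(1+s)/b) - -u/(u+(1-s)/b))/s = (1 + b * ((u⁻¹ + u)/2))⁻¹ := by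
  have h1 : 0 < u + (1+s)/b := by positivity
  have h2 : 0 < u + (1-s)/b := by
    have : 0 < (1-s)/b := div_pos (by linarith) hb
    linarith
  have h3 : 0 < 1 + b*((u⁻¹+u)/2) := by positivity
  have hD1 : (0:ℝ) < u*b+1+s := by nlinarith
  have hD2 : (0:ℝ) < u*b+1-s := by nlinarith
  have hD3 : (0:ℝ) < 2*u + b + b*u^2 := by positivity
  rw [show u + (1+s)/b = (u*b+1+s)/b by field_simp; ring,
      show u + (1-s)/b = (u*b+1-s)/b by field_simp; ring,
      show 1 + b*((u⁻¹+u)/2) = (2*u+b+b*u^2)/(2*u) by field_simp; ring,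
      div_div_eq_mul_div, div_div_eq_mul_div, inv_div]
  rw [div_eq_div_iff (by positivity) hD3.ne']
  field_simp [hD1.ne', hD2.ne']
  ring_nf
  linear_combination (2*s) * hs2

lemma my_integrable_inv_cosh {b : ℝ} (hb : 0 < b) :
    IntegrableOn (fun t : ℝ => (1 + b * Real.cosh t)⁻¹) (Set.Ioi 0) := by
  have hpos : ∀ t : ℝ, 0 < 1 + b * Real.cosh t := fun t => by
    have := Real.cosh_pos (x := t); nlinarith
  refine Integrable.mono ((exp_neg_integrableOn_Ioi 0 one_pos).const_mul (2/b))
    ((Continuous.inv₀ (by continuity) (fun t => (hpos t).ne')).aestronglyMeasurable) ?_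
  filter_upwards with t
  rw [Real.norm_eq_abs, Real.norm_eq_abs,
    abs_of_pos (by positivity : (0:ℝ) < 2 / b * Real.exp (-1*t)),
    abs_of_pos (inv_pos.2 (hpos t))]
  have h1 : b * (Real.exp t / 2) ≤ 1 + b * Real.cosh t := by
    have : Real.exp t / 2 ≤ Real.cosh t := by
      rw [Real.cosh_eq]
      have := (Real.exp_pos (-t)).le
      linarith
    nlinarith
  have h2 : (0:ℝ) < b * (Real.exp t / 2) := by positivity
  calc (1 + b * Real.cosh t)⁻¹ ≤ (b * (Real.exp t / 2))⁻¹ := inv_anti₀ h2 h1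
    _ = 2 / b * Real.exp (-1 * t) := by
        rw [neg_one_mul, Real.exp_neg]
        field_simp

lemma my_integral_inv_one_add_cosh {b : ℝ} (hb : 0 < b) (hb' : b < 1) :
    ∫ t in Set.Ioi (0:ℝ), (1 + b * Real.cosh t)⁻¹
      = (Real.log (1 + Real.sqrt (1 - b ^ 2)) - Real.log (1 - Real.sqrt (1 - b ^ 2)))
          / (2 * Real.sqrt (1 - b ^ 2)) := by
  set s := Real.sqrt (1 - b ^ 2) with hs_def
  have hb2 : (0:ℝ) < 1 - b ^ 2 := by nlinarith
  have hs2 : s ^ 2 = 1 - b ^ 2 := Real.sq_sqrt hb2.le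
  have hs : 0 < s := Real.sqrt_pos.2 hb2
  have hs1 : s < 1 := by nlinarith
  set A := (1 + s) / b with hA_def
  set B := (1 - s) / b with hB_def
  have hA : 0 < A := by positivity
  have hB : 0 < B := div_pos (by linarith) hb
  set F : ℝ → ℝ := fun t => (Real.log (Real.exp (-t) + A) - Real.log (Real.exp (-t) + B)) / s
    with hF_def
  have hderiv : ∀ t ∈ Set.Ici (0:ℝ), HasDerivAt F ((1 + b * Real.cosh t)⁻¹) t := by
    intro t _
    have hu : 0 < Real.exp (-t) := Real.exp_pos _
    have he : HasDerivAt (fun t : ℝ => Real.exp (-t)) (-Real.exp (-t)) t := by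
      simpa [mul_comm] using (hasDerivAt_neg t).exp
    have hl1 := (he.add_const A).log (by positivity : Real.exp (-t) + A ≠ 0)
    have hl2 := (he.add_const B).log (add_pos hu hB).ne'
    have hd := (hl1.sub hl2).div_const s
    have heq : (1 + b * Real.cosh t)⁻¹
        = (-Real.exp (-t) / (Real.exp (-t) + A) - -Real.exp (-t) / (Real.exp (-t) + B)) / s := by
      rw [show Real.cosh t = ((Real.exp (-t))⁻¹ + Real.exp (-t)) / 2 by
            rw [Real.cosh_eq, Real.exp_neg, inv_inv]]
      exact (key_alg b s (Real.exp (-t)) hb hs hu hs2 hs1).symm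
    rw [hF_def, heq]
    exact hd
  have htend : Tendsto F atTop (𝓝 ((Real.log A - Real.log B) / s)) := by
    have h0 : Tendsto (fun t : ℝ => Real.exp (-t)) atTop (𝓝 0) :=
      Real.tendsto_exp_neg_atTop_nhds_zero
    have hFA : Tendsto (fun t : ℝ => Real.exp (-t) + A) atTop (𝓝 A) := by
      simpa using h0.add_const A
    have hFB : Tendsto (fun t : ℝ => Real.exp (-t) + B) atTop (𝓝 B) := by
      simpa using h0.add_const B
    have hlA := (Real.continuousAt_log hA.ne').tendsto.comp hFA
    have hlB := (Real.continuousAt_log hB.ne').tendsto.comp hFB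
    exact (hlA.sub hlB).div_const s
  have hI := integral_Ioi_of_hasDerivAt_of_tendsto' hderiv (my_integrable_inv_cosh hb) htend
  rw [hI]
  have hF0 : F 0 = (Real.log (1 + A) - Real.log (1 + B)) / s := by
    simp [hF_def, add_comm]
  rw [hF0]
  have l1 : Real.log A = Real.log (1 + s) - Real.log b := by
    rw [hA_def, Real.log_div (by positivity) hb.ne']
  have l2 : Real.log B = Real.log (1 - s) - Real.log b := by
    rw [hB_def, Real.log_div (by linarith : (1:ℝ) - s ≠ 0) hb.ne']
  have l3 : Real.log (1 + A) = Real.log (b + 1 + s) - Real.log b := by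
    rw [show (1:ℝ) + A = (b + 1 + s) / b by rw [hA_def]; field_simp; ring,
      Real.log_div (by positivity) hb.ne']
  have l4 : Real.log (1 + B) = Real.log (b + 1 - s) - Real.log b := by
    rw [show (1:ℝ) + B = (b + 1 - s) / b by rw [hB_def]; field_simp; ring,
      Real.log_div (by nlinarith : b + 1 - s ≠ 0) hb.ne']
  have hq : (b + 1 + s) ^ 2 * (1 - s) = (b + 1 - s) ^ 2 * (1 + s) := by
    linear_combination (-2*s) * hs2
  have key : 2 * (Real.log (b + 1 + s) - Real.log (b + 1 - s))
      = Real.log (1 + s) - Real.log (1 - s) := by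
    have h := congrArg Real.log hq
    rw [Real.log_mul (by positivity) (by nlinarith : (1:ℝ) - s ≠ 0),
      Real.log_mul (pow_ne_zero 2 (by nlinarith : b + 1 - s ≠ 0)) (by positivity),
      Real.log_pow, Real.log_pow] at h
    push_cast at h
    linarith
  rw [l1, l2, l3, l4]
  set P := Real.log (1 + s)
  set M := Real.log (1 - s)
  set Q := Real.log (b + 1 + s)
  set R := Real.log (b + 1 - s)
  field_simp
  linear_combination (-1) * key

theorem integral_exp_besselK0_scaled (b : ℝ) (hb : 0 < b) (hb' : b < 1) :
    ∫ x in Set.Ioi (0 : ℝ), Real.exp (-x) * besselK 0 (b * x)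
      = (Real.log (1 + Real.sqrt (1 - b ^ 2)) - Real.log (1 - Real.sqrt (1 - b ^ 2)))
          / (2 * Real.sqrt (1 - b ^ 2)) := by
  have hc : ∀ t : ℝ, 0 < 1 + b * Real.cosh t := fun t => by
    have := Real.cosh_pos (x := t); nlinarith
  set g : ℝ → ℝ → ℝ := fun x t => Real.exp (-(x * (1 + b * Real.cosh t))) with hg_def
  have hinner : ∀ t : ℝ, ∫ x in Set.Ioi (0:ℝ), g x t = (1 + b * Real.cosh t)⁻¹ := by
    intro t
    rw [hg_def]
    rw [my_integral_exp_neg_mul (hc t), one_div]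
  have h1 : ∫ x in Set.Ioi (0:ℝ), Real.exp (-x) * besselK 0 (b * x)
      = ∫ x in Set.Ioi (0:ℝ), ∫ t in Set.Ioi (0:ℝ), g x t := by
    refine setIntegral_congr_fun measurableSet_Ioi fun x _ => ?_
    simp only [besselK, zero_mul, Real.cosh_zero, mul_one]
    rw [← integral_const_mul]
    congr 1
    funext t
    rw [hg_def, ← Real.exp_add]
    congr 1
    ring
  have hgm : AEStronglyMeasurable (fun p : ℝ × ℝ => g p.1 p.2)
      ((volume.restrict (Set.Ioi 0)).prod (volume.restrict (Set.Ioi 0))) := by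
    apply Continuous.aestronglyMeasurable
    rw [hg_def]
    continuity
  have hInt : Integrable (Function.uncurry g)
      ((volume.restrict (Set.Ioi 0)).prod (volume.restrict (Set.Ioi 0))) := by
    rw [show Function.uncurry g = fun p : ℝ × ℝ => g p.1 p.2 from rfl]
    rw [integrable_prod_iff' hgm]
    constructor
    · filter_upwards with t
      have h := exp_neg_integrableOn_Ioi 0 (hc t)
      refine h.congr_fun ?_ measurableSet_Ioi
      intro x _
      rw [hg_def]
      ring_nf
    · refine (my_integrable_inv_cosh hb).congr ?_
      filter_upwards [ae_restrict_mem measurableSet_Ioi] with t _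
      rw [← hinner t]
      refine setIntegral_congr_fun measurableSet_Ioi fun x _ => ?_
      rw [Real.norm_eq_abs, abs_of_pos (Real.exp_pos _)]
  have hswap : ∫ x in Set.Ioi (0:ℝ), ∫ t in Set.Ioi (0:ℝ), g x t
      = ∫ t in Set.Ioi (0:ℝ), ∫ x in Set.Ioi (0:ℝ), g x t :=
    integral_integral_swap hInt
  rw [h1, hswap]
  rw [show (fun t => ∫ x in Set.Ioi (0:ℝ), g x t) = fun t => (1 + b * Real.cosh t)⁻¹ from
    funext hinner]
  exact my_integral_inv_one_add_cosh hb hb'
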